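/- Let n ≥ 2, let q be a prime power, and let p be a primitive prime divisor of q^n − 1, i.e. p divides q^n − 1 but p does not divide q^k − 1 for any k with 1 ≤ k < n. Then every subgroup of GL_n(F_q) of order p acts irreducibly on (F_q)^n (the only invariant subspaces are 0 and the whole space), and any two subgroups of GL_n(F_q) of order p are conjugate in GL_n(F_q). -/

import Mathlib

open Matrix

/-- Auxiliary: an endomorphism of a small-dimensional space over a finite field whose `p`-th
power is the identity, where `p` is a primitive prime divisor of `q ^ n - 1`, is the identity. -/
private lemma auxEnd {F : Type*} [Field F] [Fintype F] {n p : ℕ} (hp : p.Prime)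
    (hpq : ¬ p ∣ Fintype.card F)
    (hprim : ∀ k : ℕ, 1 ≤ k → k < n → ¬ p ∣ Fintype.card F ^ k - 1)
    (W : Type*) [AddCommGroup W] [Module F W] [Module.Finite F W]
    (hdn : Module.finrank F W < n)
    (r : Module.End F W) (hr : r ^ p = 1) : r = 1 := by
  classical
  set d := Module.finrank F W with hd
  let e := algEquivMatrix (Module.finBasis F W)
  set m := e r with hm
  have hmp : m ^ p = 1 := by rw [hm, ← _root_.map_pow, hr, _root_.map_one]
  have hinv : m * m ^ (p - 1) = 1 := by
    rw [← pow_succ', Nat.sub_add_cancel hp.pos]; exact hmp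
  have hinv' : m ^ (p - 1) * m = 1 := by
    rw [← pow_succ, Nat.sub_add_cancel hp.pos]; exact hmp
  let u : GL (Fin d) F := ⟨m, m ^ (p - 1), hinv, hinv'⟩
  have hup : u ^ p = 1 := by
    apply Units.ext
    show m ^ p = 1
    exact hmp
  have hord : orderOf u ∣ p := orderOf_dvd_of_pow_eq_one hup
  have h1 : orderOf u = 1 := by
    rcases (Nat.dvd_prime hp).mp hord with h | h
    · exact h
    · exfalso
      have hdvd : p ∣ Nat.card (GL (Fin d) F) := h ▸ orderOf_dvd_natCard u
      rw [Matrix.card_GL_field] at hdvd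
      obtain ⟨i, -, hi⟩ := hp.prime.exists_mem_finset_dvd hdvd
      have hkey : Fintype.card F ^ (i : ℕ) * (Fintype.card F ^ (d - (i : ℕ)) - 1)
          = Fintype.card F ^ d - Fintype.card F ^ (i : ℕ) := by
        rw [Nat.mul_sub, mul_one, ← pow_add, Nat.add_sub_cancel' i.2.le]
      rw [← hkey] at hi
      rcases (Nat.Prime.dvd_mul hp).mp hi with h' | h'
      · exact hpq (hp.dvd_of_dvd_pow h')
      · exact hprim (d - (i : ℕ)) (by omega) (by omega) h'
  have hu1 : u = 1 := orderOf_eq_one_iff.mp h1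
  have hm1 : m = 1 := congrArg Units.val hu1
  apply e.injective
  rw [← hm, hm1, _root_.map_one]

/-- For a primitive prime divisor `p` of `q^n - 1`, every subgroup of order `p` of
`GL_n(F_q)` acts irreducibly on `(F_q)^n`, and all such subgroups are conjugate. -/
theorem stmt_3 (n : ℕ) (hn : 2 ≤ n) (q : ℕ) (hq : IsPrimePow q)
    (F : Type*) [Field F] [Fintype F] (hF : Fintype.card F = q)
    (p : ℕ) (hp : p.Prime) (hdvd : p ∣ q ^ n - 1)
    (hprim : ∀ k : ℕ, 1 ≤ k → k < n → ¬ p ∣ q ^ k - 1) :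
    (∀ U : Subgroup (Matrix.GeneralLinearGroup (Fin n) F), Nat.card U = p →
      ∀ W : Submodule F (Fin n → F),
        (∀ u : Matrix.GeneralLinearGroup (Fin n) F, u ∈ U →
          ∀ v ∈ W, Matrix.mulVec (u : Matrix (Fin n) (Fin n) F) v ∈ W) →
        W = ⊥ ∨ W = ⊤) ∧
    (∀ U₁ U₂ : Subgroup (Matrix.GeneralLinearGroup (Fin n) F),
      Nat.card U₁ = p → Nat.card U₂ = p →
      ∃ g : Matrix.GeneralLinearGroup (Fin n) F,
        Subgroup.map (MulAut.conj g).toMonoidHom U₁ = U₂) := by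
  classical
  subst hF
  haveI : Fact p.Prime := ⟨hp⟩
  set G := Matrix.GeneralLinearGroup (Fin n) F with hG
  haveI : Finite (Matrix (Fin n) (Fin n) F) := by infer_instance
  haveI : Finite G := by
    exact Finite.of_injective (fun u : G => ((u : Matrix (Fin n) (Fin n) F),
      ((u⁻¹ : G) : Matrix (Fin n) (Fin n) F)))
      (fun a b h => by
        apply Units.ext
        exact (Prod.mk.injEq _ _ _ _ ▸ h).1)
  -- p does not divide q
  have hpq : ¬ p ∣ Fintype.card F := by
    intro h
    have h1 : p ∣ Fintype.card F ^ n := dvd_pow h (by omega)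
    have h2 : (1 : ℕ) ≤ Fintype.card F ^ n := Nat.one_le_pow _ _ Fintype.card_pos
    have := Nat.dvd_sub h1 hdvd
    rw [Nat.sub_sub_self h2] at this
    exact hp.one_lt.ne' (Nat.dvd_one.mp this)
  have hVrank : Module.finrank F (Fin n → F) = n := by
    simp [Module.finrank_fintype_fun_eq_card]
  -- Part 1, for a single element of order p
  have part1core : ∀ u : G, orderOf u = p → ∀ W : Submodule F (Fin n → F),
      (∀ v ∈ W, Matrix.mulVec (u : Matrix (Fin n) (Fin n) F) v ∈ W) →
      W = ⊥ ∨ W = ⊤ := by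
    intro u hu W hW
    by_contra hcon
    push_neg at hcon
    obtain ⟨hWbot, hWtop⟩ := hcon
    have h0 : 0 < Module.finrank F W :=
      Nat.pos_of_ne_zero fun h => hWbot (Submodule.finrank_eq_zero.mp h)
    have hdn : Module.finrank F W < n := by
      have := Submodule.finrank_lt hWtop
      omega
    set L := Matrix.toLinAlgEquiv' (u : Matrix (Fin n) (Fin n) F) with hLdef
    have hLapp : ∀ v, L v = Matrix.mulVec (u : Matrix (Fin n) (Fin n) F) v := fun v =>
      Matrix.toLinAlgEquiv'_apply _ v
    have hLW : ∀ x ∈ W, L x ∈ W := fun x hx => (hLapp x) ▸ hW x hx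
    have hup : (u : Matrix (Fin n) (Fin n) F) ^ p = 1 := by
      rw [← Units.val_pow_eq_pow_val, ← hu, pow_orderOf_eq_one, Units.val_one]
    have hLp : L ^ p = 1 := by
      rw [hLdef, ← _root_.map_pow, hup, _root_.map_one]
    -- restriction to W is the identity
    have hres : (L.restrict hLW) ^ p = 1 := by
      rw [Module.End.pow_restrict]
      ext x
      simp [hLp]
    have hres1 : L.restrict hLW = 1 :=
      auxEnd hp hpq hprim W hdn _ hres
    have hWfix : ∀ x ∈ W, L x = x := by
      intro x hx
      have := congrArg Subtype.val (LinearMap.ext_iff.mp hres1 ⟨x, hx⟩)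
      simpa [LinearMap.restrict_apply] using this
    -- quotient action is the identity
    have hle : W ≤ W.comap L := fun x hx => hLW x hx
    have hquot : Module.finrank F ((Fin n → F) ⧸ W) < n := by
      have := Submodule.finrank_quotient_add_finrank W
      omega
    have hqp : (W.mapQ W L hle) ^ p = 1 := by
      rw [← Submodule.mapQ_pow]
      have : L ^ p = LinearMap.id := by rw [hLp]; rfl
      ext x
      simp [this, Submodule.mapQ_apply]
    have hq1 : W.mapQ W L hle = 1 :=
      auxEnd hp hpq hprim ((Fin n → F) ⧸ W) hquot _ hqp
    have hWq : ∀ x, L x - x ∈ W := by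
      intro x
      have := LinearMap.ext_iff.mp hq1 (Submodule.Quotient.mk x)
      rw [Submodule.mapQ_apply] at this
      exact (Submodule.Quotient.eq W).mp this
    -- now L = 1 + N with N square zero, so L^p = 1 + p N
    have hNv : ∀ (k : ℕ) (v), (L ^ k) v = v + (k : F) • (L v - v) := by
      intro k
      induction k with
      | zero => intro v; simp
      | succ k ih =>
        intro v
        have hstep : L (L v - v) = L v - v := hWfix _ (hWq v)
        calc (L ^ (k + 1)) v = L ((L ^ k) v) := by rw [pow_succ']; rfl
          _ = L (v + (k : F) • (L v - v)) := by rw [ih]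
          _ = L v + (k : F) • (L v - v) := by rw [_root_.map_add, _root_.map_smul, hstep]
          _ = v + ((k + 1 : ℕ) : F) • (L v - v) := by
              rw [Nat.cast_add, Nat.cast_one, add_smul, one_smul]
              have : L v = v + (L v - v) := by abel
              rw [this]; abel
    have hpF : (p : F) ≠ 0 := by
      intro h
      have h1 : ringChar F ∣ p := (CharP.cast_eq_zero_iff F (ringChar F) p).mp h
      have h2 : (ringChar F).Prime := CharP.char_is_prime F (ringChar F)
      have h3 : ringChar F = p := (Nat.prime_dvd_prime_iff_eq h2 hp).mp h1
      obtain ⟨k, hchar, hk⟩ := FiniteField.card F (ringChar F)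
      apply hpq
      rw [hk, ← h3]
      exact dvd_pow_self _ (by positivity)
    have hLid : ∀ v, L v = v := by
      intro v
      have h1 := hNv p v
      rw [hLp] at h1
      simp only [Module.End.one_apply] at h1
      have h2 : (p : F) • (L v - v) = 0 := by
        have h3 := h1.symm
        rwa [add_eq_left] at h3
      rcases smul_eq_zero.mp h2 with h | h
      · exact absurd h hpF
      · have : L v = v := by
          have := sub_eq_zero.mp h
          exact this
        exact this
    have hu1 : u = 1 := by
      apply Units.ext
      apply Matrix.toLinAlgEquiv'.injective
      rw [Units.val_one, _root_.map_one]
      exact LinearMap.ext fun v => by simpa [hLapp] using hLid v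
    rw [hu1, orderOf_one] at hu
    exact hp.one_lt.ne' hu.symm
  -- Part 1, for subgroups
  have part1 : ∀ U : Subgroup G, Nat.card U = p →
      ∀ W : Submodule F (Fin n → F),
        (∀ u : G, u ∈ U → ∀ v ∈ W, Matrix.mulVec (u : Matrix (Fin n) (Fin n) F) v ∈ W) →
        W = ⊥ ∨ W = ⊤ := by
    intro U hU W hW
    obtain ⟨x, hx⟩ := exists_prime_orderOf_dvd_card' (G := ↥U) p (hU ▸ dvd_refl p)
    exact part1core x.1 ((Subgroup.orderOf_coe x).trans hx) W (fun v hv => hW x.1 x.2 v hv)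
  refine ⟨part1, ?_⟩
  -- uniqueness of subgroups of order p inside a cyclic subgroup
  have uniq : ∀ (P : Subgroup G), IsCyclic ↥P → ∀ V₁ V₂ : Subgroup G, V₁ ≤ P → V₂ ≤ P →
      Nat.card V₁ = p → Nat.card V₂ = p → V₁ = V₂ := by
    intro P hcyc V₁ V₂ h1 h2 hc1 hc2
    haveI := hcyc
    haveI : Fintype ↥P := Fintype.ofFinite _
    have key : ∀ V : Subgroup G, V ≤ P → Nat.card V = p →
        Set.toFinset ((V.subgroupOf P : Subgroup ↥P) : Set ↥P)
          = Finset.univ.filter (fun a : ↥P => a ^ p = 1) := by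
      intro V hVP hVc
      have hcard : Nat.card (V.subgroupOf P) = p := by
        rw [← hVc]
        exact Nat.card_congr (Subgroup.subgroupOfEquivOfLe hVP).toEquiv
      apply Finset.eq_of_subset_of_card_le
      · intro x hx
        rw [Set.mem_toFinset] at hx
        rw [Finset.mem_filter]
        refine ⟨Finset.mem_univ _, ?_⟩
        have := Subgroup.orderOf_dvd_natCard _ hx
        rw [hcard] at this
        exact orderOf_dvd_iff_pow_eq_one.mp this
      · have hA : (Set.toFinset ((V.subgroupOf P : Subgroup ↥P) : Set ↥P)).card = p := by
          rw [Set.toFinset_card, ← Nat.card_eq_fintype_card]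
          exact hcard
        rw [hA]
        exact IsCyclic.card_pow_eq_one_le hp.pos
    have hset : ((V₁.subgroupOf P : Subgroup ↥P) : Set ↥P)
        = ((V₂.subgroupOf P : Subgroup ↥P) : Set ↥P) := by
      rw [← Set.toFinset_inj, key V₁ h1 hc1, key V₂ h2 hc2]
    have hsub : V₁.subgroupOf P = V₂.subgroupOf P := SetLike.ext' hset
    have := Subgroup.subgroupOf_inj.mp hsub
    rwa [inf_eq_left.mpr h1, inf_eq_left.mpr h2] at this
  -- every Sylow p-subgroup containing a subgroup of order p is cyclic
  have cyc : ∀ (P : Sylow p G) (V : Subgroup G), V ≤ P → Nat.card V = p →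
      IsCyclic ↥(P : Subgroup G) := by
    intro P V hVP hVc
    obtain ⟨x, hx⟩ := exists_prime_orderOf_dvd_card' (G := ↥V) p (hVc ▸ dvd_refl p)
    have hxG : orderOf (x : G) = p := (Subgroup.orderOf_coe x).trans hx
    haveI : Nontrivial ↥(P : Subgroup G) := by
      refine ⟨⟨⟨(x : G), hVP x.2⟩, 1, ?_⟩⟩
      intro h
      have : (x : G) = 1 := congrArg Subtype.val h
      rw [this, orderOf_one] at hxG
      exact hp.one_lt.ne' hxG.symm
    have hPp : IsPGroup p ↥(P : Subgroup G) := P.2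
    haveI : Nontrivial ↥(Subgroup.center ↥(P : Subgroup G)) := hPp.center_nontrivial
    have hcent : IsPGroup p ↥(Subgroup.center ↥(P : Subgroup G)) :=
      hPp.to_subgroup (Subgroup.center ↥(P : Subgroup G))
    obtain ⟨k, hk⟩ := IsPGroup.iff_card.mp hcent
    have hk1 : 1 ≤ k := by
      by_contra hcontra
      push_neg at hcontra
      interval_cases k
      · rw [pow_zero] at hk
        exact (Finite.one_lt_card (α := ↥(Subgroup.center ↥(P : Subgroup G)))).ne' hk
    obtain ⟨z₀, hz₀⟩ := exists_prime_orderOf_dvd_card'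
      (G := ↥(Subgroup.center ↥(P : Subgroup G))) p
      (by rw [hk]; exact dvd_pow_self p (by omega))
    set z : G := ((z₀ : ↥(P : Subgroup G)) : G) with hzdef
    have hzord : orderOf z = p := by
      rw [hzdef, Subgroup.orderOf_coe, Subgroup.orderOf_coe, hz₀]
    have hzcard : Nat.card (Subgroup.zpowers z) = p := by
      rw [Nat.card_zpowers, hzord]
    have hcomm : ∀ y : ↥(P : Subgroup G), (y : G) * z = z * (y : G) := by
      intro y
      have h := Subgroup.mem_center_iff.mp z₀.2 y
      exact congrArg Subtype.val h
    -- the commutant algebra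
    set C := Subalgebra.centralizer F ({(z : Matrix (Fin n) (Fin n) F)} : Set _) with hCdef
    have hmemC : ∀ y : ↥(P : Subgroup G), ((y : G) : Matrix (Fin n) (Fin n) F) ∈ C := by
      intro y
      rw [hCdef, Subalgebra.mem_centralizer_iff]
      rintro g hg
      rw [Set.mem_singleton_iff] at hg
      subst hg
      exact (congrArg Units.val (hcomm y)).symm
    -- injectivity of nonzero elements of the commutant
    have hinj : ∀ a : Matrix (Fin n) (Fin n) F, a ∈ C → a ≠ 0 →
        Function.Injective a.mulVecLin := by
      intro a haC ha0
      have hcommz : (z : Matrix (Fin n) (Fin n) F) * a = a * (z : Matrix (Fin n) (Fin n) F) := by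
        rw [hCdef, Subalgebra.mem_centralizer_iff] at haC
        exact haC _ (Set.mem_singleton _)
      have hker := part1 (Subgroup.zpowers z) hzcard (LinearMap.ker a.mulVecLin) ?_
      · rcases hker with h | h
        · exact LinearMap.ker_eq_bot.mp h
        · exfalso
          apply ha0
          have hzero : a.mulVecLin = 0 := LinearMap.ker_eq_top.mp h
          apply Matrix.toLinAlgEquiv'.injective
          rw [_root_.map_zero]
          apply LinearMap.ext
          intro v
          have : a.mulVecLin v = 0 := by rw [hzero]; rfl
          simpa [Matrix.toLinAlgEquiv'_apply, Matrix.mulVecLin_apply] using this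
      · intro u hu v hv
        obtain ⟨k, hk⟩ := mem_powers_iff_mem_zpowers.mpr hu
        have huval : (u : Matrix (Fin n) (Fin n) F) = (z : Matrix (Fin n) (Fin n) F) ^ k := by
          rw [← hk, Units.val_pow_eq_pow_val]
        rw [LinearMap.mem_ker] at hv ⊢
        rw [Matrix.mulVecLin_apply] at hv ⊢
        have hc : Commute a ((z : G) : Matrix (Fin n) (Fin n) F) :=
          ((show Commute ((z : G) : Matrix (Fin n) (Fin n) F) a from hcommz).symm)
        rw [huval, Matrix.mulVec_mulVec, (hc.pow_right k).eq,
          ← Matrix.mulVec_mulVec, hv, Matrix.mulVec_zero]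
    haveI : Nontrivial ↥C := by
      refine ⟨0, 1, fun h => ?_⟩
      have h' : (0 : Matrix (Fin n) (Fin n) F) = 1 := congrArg Subtype.val h
      have := congrFun (congrFun h' ⟨0, by omega⟩) ⟨0, by omega⟩
      simp [Matrix.one_apply_eq] at this
    haveI : NoZeroDivisors ↥C := by
      refine ⟨fun {a b} hab => ?_⟩
      by_cases ha : a = 0
      · exact Or.inl ha
      · right
        have hval : (a : Matrix (Fin n) (Fin n) F) * (b : Matrix (Fin n) (Fin n) F) = 0 := by
          have := congrArg Subtype.val hab
          simpa using this
        have ha0 : (a : Matrix (Fin n) (Fin n) F) ≠ 0 := fun h => ha (Subtype.ext h)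
        have hbv : ∀ v, (b : Matrix (Fin n) (Fin n) F).mulVec v = 0 := by
          intro v
          have h4 : (a : Matrix (Fin n) (Fin n) F).mulVec
              ((b : Matrix (Fin n) (Fin n) F).mulVec v) = 0 := by
            rw [Matrix.mulVec_mulVec, hval, Matrix.zero_mulVec]
          exact hinj (a : Matrix (Fin n) (Fin n) F) a.2 ha0
            (show (a : Matrix (Fin n) (Fin n) F).mulVecLin _
              = (a : Matrix (Fin n) (Fin n) F).mulVecLin 0 by
              simp only [Matrix.mulVecLin_apply, Matrix.mulVec_zero, h4])
        apply Subtype.ext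
        show (b : Matrix (Fin n) (Fin n) F) = 0
        apply Matrix.toLinAlgEquiv'.injective
        rw [_root_.map_zero]
        apply LinearMap.ext
        intro v
        simpa [Matrix.toLinAlgEquiv'_apply] using hbv v
    haveI hdom : IsDomain ↥C := NoZeroDivisors.to_isDomain _
    haveI : Finite ↥C := by infer_instance
    letI : Fintype ↥C := Fintype.ofFinite _
    letI : DecidableEq ↥C := Classical.decEq _
    letI dr : DivisionRing ↥C := Fintype.divisionRingOfIsDomain _
    letI fld : Field ↥C := littleWedderburn _
    -- embed P into the commutant
    let φ : ↥(P : Subgroup G) →* ↥C :=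
      { toFun := fun y => ⟨((y : G) : Matrix (Fin n) (Fin n) F), hmemC y⟩
        map_one' := Subtype.ext rfl
        map_mul' := fun a b => Subtype.ext rfl }
    have hφinj : Function.Injective φ := by
      intro a b h
      apply Subtype.ext
      apply Units.ext
      exact congrArg Subtype.val h
    exact @isCyclic_of_subgroup_isDomain ↥C ↥(P : Subgroup G) fld.toCommRing hdom _ _ φ hφinj
  -- conclude conjugacy
  intro U₁ U₂ h₁ h₂
  have hpg1 : IsPGroup p ↥U₁ := IsPGroup.of_card (by rw [h₁, pow_one])
  have hpg2 : IsPGroup p ↥U₂ := IsPGroup.of_card (by rw [h₂, pow_one])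
  obtain ⟨P₁, hle₁⟩ := hpg1.exists_le_sylow
  obtain ⟨P₂, hle₂⟩ := hpg2.exists_le_sylow
  haveI : Finite (Subgroup G) :=
    Finite.of_injective (fun H : Subgroup G => (H : Set G)) SetLike.coe_injective
  haveI : Finite (Sylow p G) :=
    Finite.of_injective (fun P : Sylow p G => (P : Subgroup G))
      (fun a b h => Sylow.ext h)
  obtain ⟨g, hg⟩ := MulAction.exists_smul_eq G P₁ P₂
  refine ⟨g, ?_⟩
  have hmap_le : Subgroup.map (MulAut.conj g).toMonoidHom U₁ ≤ (P₂ : Subgroup G) := by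
    rintro - ⟨x, hx, rfl⟩
    rw [← hg]
    show (MulAut.conj g).toMonoidHom x ∈ ((g • P₁ : Sylow p G) : Subgroup G)
    rw [Sylow.smul_def, Sylow.pointwise_smul_def]
    exact Subgroup.smul_mem_pointwise_smul x (MulAut.conj g) _ (hle₁ hx)
  have hcm : Nat.card (Subgroup.map (MulAut.conj g).toMonoidHom U₁) = p := by
    rw [← h₁]
    exact (Nat.card_congr (Subgroup.equivMapOfInjective U₁ _
      (MulAut.conj g).injective).toEquiv).symm
  exact uniq P₂ (cyc P₂ U₂ hle₂ h₂) _ U₂ hmap_le hle₂ hcm h₂
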